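/- Let n, N be positive integers with n ≤ N/3 and let B ∈ [0, 1/n]. Define f : [0, n]² → ℝ by f(x, y) = x·log(n²/(N·x)) + y·log(n²/(N·y)) + 2n·( h((n−x)/n) + h((n−y)/n) ) + N·( h((N−2n+x)/N) + h((N−2n+y)/N) ) + B·x·y, with the terms x·log(n²/(N·x)) and h at 0 interpreted by the convention 0·log∞ = 0. Then f is continuous on [0, n]², and there is an absolute constant C < ∞ such that f attains its maximum over [0, n]² at a point (x*, y*) lying in the square [n²/N, (n²/N)·(1 + C·n/N)]². -/

import Mathlib

open Real

noncomputable section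

/-- The entropy-type function h(x) = x log(1/x) (with h(0) = 0, using `Real.log 0 = 0`). -/
def hfun (x : ℝ) : ℝ := x * Real.log (1 / x)

/-- The entropy–energy functional of the dense above-boundary claim:
`f(x,y) = x log(n²/(Nx)) + y log(n²/(Ny)) + 2n(h((n−x)/n) + h((n−y)/n))
          + N(h((N−2n+x)/N) + h((N−2n+y)/N)) + Bxy`,
with the conventions `0 log ∞ = 0` (realized by `Real.log 0 = 0`). -/
def fQ (n N : ℕ) (B x y : ℝ) : ℝ :=
  x * Real.log ((n : ℝ) ^ 2 / (N * x)) + y * Real.log ((n : ℝ) ^ 2 / (N * y))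
    + 2 * n * (hfun (((n : ℝ) - x) / n) + hfun (((n : ℝ) - y) / n))
    + N * (hfun (((N : ℝ) - 2 * n + x) / N) + hfun (((N : ℝ) - 2 * n + y) / N))
    + B * x * y

/-- One-variable part of `fQ`. -/
def G (n N : ℕ) (x : ℝ) : ℝ :=
  x * Real.log ((n:ℝ)^2 / N) - x * Real.log x
    - 2 * (((n:ℝ) - x) * Real.log (((n:ℝ) - x) / n))
    - (((N:ℝ) - 2*n + x) * Real.log (((N:ℝ) - 2*n + x) / N))

lemma mul_log_div_eq (c x : ℝ) (hc : c ≠ 0) :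
    x * Real.log (x / c) = x * Real.log x - x * Real.log c := by
  rcases eq_or_ne x 0 with h | h
  · simp [h]
  · rw [Real.log_div h hc]; ring

lemma mul_log_div_eq' (A x : ℝ) (hA : A ≠ 0) :
    x * Real.log (A / x) = x * Real.log A - x * Real.log x := by
  rcases eq_or_ne x 0 with h | h
  · simp [h]
  · rw [Real.log_div hA h]; ring

lemma hfun_eq (x : ℝ) : hfun x = -(x * Real.log x) := by
  rw [hfun, one_div, Real.log_inv]; ring

lemma mul_hfun (c m : ℝ) (hm : m ≠ 0) :
    m * hfun (c / m) = -(c * Real.log (c / m)) := by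
  rw [hfun_eq, mul_neg]
  rw [show m * (c / m * Real.log (c / m)) = m * (c / m) * Real.log (c / m) by ring,
    mul_div_cancel₀ c hm]

lemma fQ_eq (n N : ℕ) (B x y : ℝ) (hn : (n:ℝ) ≠ 0) (hN : (N:ℝ) ≠ 0) :
    fQ n N B x y = G n N x + G n N y + B * x * y := by
  have hA : (n:ℝ)^2 / N ≠ 0 := by positivity
  unfold fQ G
  rw [show (n:ℝ)^2 / (N * x) = ((n:ℝ)^2 / N) / x by rw [div_div],
    show (n:ℝ)^2 / (N * y) = ((n:ℝ)^2 / N) / y by rw [div_div],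
    mul_log_div_eq' _ x hA, mul_log_div_eq' _ y hA]
  have h1 := mul_hfun ((n:ℝ) - x) n hn
  have h2 := mul_hfun ((n:ℝ) - y) n hn
  have h3 := mul_hfun ((N:ℝ) - 2*n + x) N hN
  have h4 := mul_hfun ((N:ℝ) - 2*n + y) N hN
  nlinarith [h1, h2, h3, h4]

lemma continuous_G (n N : ℕ) (hn : (n:ℝ) ≠ 0) (hN : (N:ℝ) ≠ 0) :
    Continuous (G n N) := by
  have hrw : G n N = fun x =>
      x * Real.log ((n:ℝ)^2 / N) - x * Real.log x
      - 2 * ((((n:ℝ) - x) * Real.log ((n:ℝ) - x)) - ((n:ℝ) - x) * Real.log n)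
      - (((((N:ℝ) - 2*n + x) * Real.log ((N:ℝ) - 2*n + x))) - ((N:ℝ) - 2*n + x) * Real.log N) := by
    funext x
    rw [G, mul_log_div_eq _ _ hn, mul_log_div_eq _ _ hN]
  rw [hrw]
  have hml : Continuous fun x : ℝ => x * Real.log x := Real.continuous_mul_log
  fun_prop

lemma hasDerivAt_mul_log_div (c t : ℝ) (hc : c ≠ 0) (ht : t ≠ 0) :
    HasDerivAt (fun t => t * Real.log (t / c)) (Real.log (t / c) + 1) t := by
  have h1 : (fun t : ℝ => t * Real.log (t / c)) = fun t => t * Real.log t - t * Real.log c :=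
    funext fun t => mul_log_div_eq c t hc
  rw [h1, Real.log_div ht hc]
  have h := (Real.hasDerivAt_mul_log ht).sub ((hasDerivAt_id t).mul_const (Real.log c))
  exact h.congr_deriv (by ring)

lemma hasDerivAt_G (n N : ℕ) (hn : 0 < (n:ℝ)) (hN : 0 < (N:ℝ)) (h3 : 3*(n:ℝ) ≤ N)
    (x : ℝ) (hx : 0 < x) (hxn : x < n) :
    HasDerivAt (G n N)
      (Real.log (((n:ℝ) - x)^2 / (x * ((N:ℝ) - 2*n + x)))) x := by
  have hnx : (0:ℝ) < (n:ℝ) - x := by linarith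
  have hW : (0:ℝ) < (N:ℝ) - 2*n + x := by linarith
  have h1 : HasDerivAt (fun x : ℝ => x * Real.log ((n:ℝ)^2 / N)) (Real.log ((n:ℝ)^2 / N)) x := by
    simpa using (hasDerivAt_id x).mul_const (Real.log ((n:ℝ)^2 / N))
  have h2 : HasDerivAt (fun x : ℝ => x * Real.log x) (Real.log x + 1) x :=
    Real.hasDerivAt_mul_log hx.ne'
  have hu3 : HasDerivAt (fun x : ℝ => (n:ℝ) - x) (-1) x := by
    exact ((hasDerivAt_const x (n:ℝ)).sub (hasDerivAt_id x)).congr_deriv (by norm_num)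
  have h3' : HasDerivAt (fun x : ℝ => ((n:ℝ) - x) * Real.log (((n:ℝ) - x) / n))
      (-(Real.log (((n:ℝ) - x) / n) + 1)) x := by
    have := (hasDerivAt_mul_log_div (n:ℝ) ((n:ℝ) - x) hn.ne' hnx.ne').comp x hu3
    exact this.congr_deriv (by ring)
  have hu4 : HasDerivAt (fun x : ℝ => (N:ℝ) - 2*n + x) 1 x := by
    exact ((hasDerivAt_const x ((N:ℝ) - 2*n)).add (hasDerivAt_id x)).congr_deriv (by norm_num)
  have h4 : HasDerivAt (fun x : ℝ => ((N:ℝ) - 2*n + x) * Real.log (((N:ℝ) - 2*n + x) / N))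
      (Real.log (((N:ℝ) - 2*n + x) / N) + 1) x := by
    have := (hasDerivAt_mul_log_div (N:ℝ) ((N:ℝ) - 2*n + x) hN.ne' hW.ne').comp x hu4
    exact this.congr_deriv (by ring)
  have hd := ((h1.sub h2).sub (h3'.const_mul 2)).sub h4
  refine hd.congr_deriv ?_
  rw [Real.log_div (by positivity) (by positivity : x * ((N:ℝ) - 2*n + x) ≠ 0),
    Real.log_pow, Real.log_mul hx.ne' hW.ne',
    Real.log_div (by positivity : ((n:ℝ))^2 ≠ 0) hN.ne', Real.log_pow,
    Real.log_div hnx.ne' hn.ne', Real.log_div hW.ne' hN.ne']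
  push_cast
  ring

lemma fQ_symm (n N : ℕ) (B x y : ℝ) : fQ n N B x y = fQ n N B y x := by
  unfold fQ; ring

set_option maxHeartbeats 1000000 in
/-- The main one-coordinate bound lemma. -/
lemma coord_bound (n N : ℕ) (B : ℝ) (hn : 0 < n) (hN : 0 < N) (h3 : 3*n ≤ N)
    (hB0 : 0 ≤ B) (hB1 : B ≤ 1/(n:ℝ)) (a b : ℝ)
    (hab : (a, b) ∈ Set.Icc (0:ℝ) (n:ℝ) ×ˢ Set.Icc (0:ℝ) (n:ℝ))
    (hmax : IsMaxOn (fun p : ℝ × ℝ => fQ n N B p.1 p.2)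
      (Set.Icc (0:ℝ) (n:ℝ) ×ˢ Set.Icc (0:ℝ) (n:ℝ)) (a, b)) :
    (n:ℝ)^2/N ≤ a ∧ (12*(n:ℝ) ≤ N → a ≤ 9*(n:ℝ)^2/N) ∧
      (12*(n:ℝ) ≤ N → b ≤ 9*(n:ℝ)^2/N → a ≤ (n:ℝ)^2/N*(1+81*n/N)) := by
  have np : (0:ℝ) < n := by exact_mod_cast hn
  have Np : (0:ℝ) < N := by exact_mod_cast hN
  have h3r : 3*(n:ℝ) ≤ N := by exact_mod_cast h3
  obtain ⟨⟨ha0, han⟩, ⟨hb0, hbn⟩⟩ := hab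
  have hn2N : (n:ℝ)^2/N ≤ n := by
    rw [div_le_iff₀ Np]; nlinarith
  -- the one-variable function
  set f1 : ℝ → ℝ := fun x => G n N x + B * x * b with hf1
  have hfq : ∀ x, fQ n N B x b = f1 x + G n N b := by
    intro x
    rw [fQ_eq n N B x b np.ne' Np.ne', hf1]; ring
  have hcontf1 : Continuous f1 := by
    have := continuous_G n N np.ne' Np.ne'
    fun_prop
  have hd : ∀ x : ℝ, 0 < x → x < (n:ℝ) →
      HasDerivAt f1 (Real.log (((n:ℝ) - x)^2 / (x * ((N:ℝ) - 2*n + x))) + B * b) x := by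
    intro x hx hxn
    exact (hasDerivAt_G n N np Np h3r x hx hxn).add
      (by simpa using ((hasDerivAt_id x).const_mul B).mul_const b)
  have hBb0 : 0 ≤ B * b := mul_nonneg hB0 hb0
  -- Claim 1 : lower bound
  have claim1 : (n:ℝ)^2/N ≤ a := by
    by_contra hcon
    push_neg at hcon
    have hmono : StrictMonoOn f1 (Set.Icc 0 ((n:ℝ)^2/N)) := by
      apply strictMonoOn_of_deriv_pos (convex_Icc _ _) hcontf1.continuousOn
      intro x hx
      rw [interior_Icc] at hx
      obtain ⟨hx0, hx1⟩ := hx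
      have hxn : x < n := lt_of_lt_of_le hx1 hn2N
      rw [(hd x hx0 hxn).deriv]
      have hW : (0:ℝ) < (N:ℝ) - 2*n + x := by linarith
      have hden : 0 < x * ((N:ℝ) - 2*n + x) := by positivity
      have hNx : x * N < (n:ℝ)^2 := (lt_div_iff₀ Np).mp hx1
      have hR1 : 1 < ((n:ℝ) - x)^2 / (x * ((N:ℝ) - 2*n + x)) := by
        rw [lt_div_iff₀ hden]; nlinarith
      have := Real.log_pos hR1
      linarith
    have hmem1 : a ∈ Set.Icc (0:ℝ) ((n:ℝ)^2/N) := ⟨ha0, hcon.le⟩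
    have hmem2 : (n:ℝ)^2/N ∈ Set.Icc (0:ℝ) ((n:ℝ)^2/N) := ⟨by positivity, le_refl _⟩
    have hlt : f1 a < f1 ((n:ℝ)^2/N) := hmono hmem1 hmem2 hcon
    have hle : fQ n N B ((n:ℝ)^2/N) b ≤ fQ n N B a b :=
      hmax (Set.mk_mem_prod ⟨by positivity, hn2N⟩ ⟨hb0, hbn⟩)
    rw [hfq, hfq] at hle
    linarith
  -- Claim 2 : crude upper bound (when N ≥ 12 n)
  have claim2 : 12*(n:ℝ) ≤ N → a ≤ 9*(n:ℝ)^2/N := by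
    intro h12
    by_contra hcon
    push_neg at hcon
    have h9n : 9*(n:ℝ)^2/N ≤ n := by
      rw [div_le_iff₀ Np]; nlinarith
    have hBb1 : B * b ≤ 1 := by
      have := mul_le_mul hB1 hbn hb0 (by positivity : (0:ℝ) ≤ 1/(n:ℝ))
      rwa [one_div, inv_mul_cancel₀ np.ne'] at this
    have hanti : StrictAntiOn f1 (Set.Icc (9*(n:ℝ)^2/N) (n:ℝ)) := by
      apply strictAntiOn_of_deriv_neg (convex_Icc _ _) hcontf1.continuousOn
      intro x hx
      rw [interior_Icc] at hx
      obtain ⟨hx1, hxn⟩ := hx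
      have hx0 : 0 < x := lt_of_le_of_lt (by positivity) hx1
      rw [(hd x hx0 hxn).deriv]
      have hW : (0:ℝ) < (N:ℝ) - 2*n + x := by linarith
      have hden : 0 < x * ((N:ℝ) - 2*n + x) := by positivity
      have hxN : 9*(n:ℝ)^2 < x * N := by
        rw [show 9*(n:ℝ)^2/N = (9*(n:ℝ)^2)/N by ring] at hx1
        exact (div_lt_iff₀ Np).mp hx1
      have hRle : ((n:ℝ) - x)^2 / (x * ((N:ℝ) - 2*n + x)) ≤ 2/15 := by
        rw [div_le_iff₀ hden]
        nlinarith [mul_lt_mul_of_pos_right hxN np, mul_pos hx0 np]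
      have hexp : (2:ℝ)/15 < Real.exp (-1) := by
        rw [Real.exp_neg]
        have he : Real.exp 1 < 7.5 := lt_trans Real.exp_one_lt_d9 (by norm_num)
        have hip : 0 < (Real.exp 1)⁻¹ := by positivity
        have : (Real.exp 1)⁻¹ * Real.exp 1 = 1 := inv_mul_cancel₀ (Real.exp_pos 1).ne'
        nlinarith
      have hR0 : 0 < ((n:ℝ) - x)^2 / (x * ((N:ℝ) - 2*n + x)) := by
        have : (0:ℝ) < (n:ℝ) - x := by linarith
        positivity
      have hlog : Real.log (((n:ℝ) - x)^2 / (x * ((N:ℝ) - 2*n + x))) < -1 :=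
        (Real.log_lt_iff_lt_exp hR0).mpr (lt_of_le_of_lt hRle hexp)
      linarith
    have hmem1 : 9*(n:ℝ)^2/N ∈ Set.Icc (9*(n:ℝ)^2/N) (n:ℝ) := ⟨le_refl _, h9n⟩
    have hmem2 : a ∈ Set.Icc (9*(n:ℝ)^2/N) (n:ℝ) := ⟨hcon.le, han⟩
    have hlt : f1 a < f1 (9*(n:ℝ)^2/N) := hanti hmem1 hmem2 hcon
    have hle : fQ n N B (9*(n:ℝ)^2/N) b ≤ fQ n N B a b :=
      hmax (Set.mk_mem_prod ⟨by positivity, h9n⟩ ⟨hb0, hbn⟩)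
    rw [hfq, hfq] at hle
    linarith
  refine ⟨claim1, claim2, ?_⟩
  -- Claim 3 : sharp upper bound
  intro h12 hb9
  by_contra hcon
  push_neg at hcon
  have ha9 : a ≤ 9*(n:ℝ)^2/N := claim2 h12
  have h9n : 9*(n:ℝ)^2/N ≤ n := by
    rw [div_le_iff₀ Np]; nlinarith
  have hX2eq : (n:ℝ)^2/N*(1+81*n/N) = (n:ℝ)^2*(N+81*n)/N^2 := by
    field_simp
  have hX2le : (n:ℝ)^2/N*(1+81*n/N) ≤ 9*(n:ℝ)^2/N := by
    rw [hX2eq, div_le_div_iff₀ (by positivity) Np]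
    nlinarith [mul_nonneg (mul_nonneg (sq_nonneg (n:ℝ)) Np.le)
      (show (0:ℝ) ≤ 8*(N:ℝ) - 81*n by linarith)]
  have hBb : B * b ≤ 9*(n:ℝ)/N := by
    have h := mul_le_mul hB1 hb9 hb0 (by positivity : (0:ℝ) ≤ 1/(n:ℝ))
    have heq : 1/(n:ℝ) * (9*(n:ℝ)^2/N) = 9*(n:ℝ)/N := by
      field_simp
    linarith [heq ▸ h]
  have hX2pos : (0:ℝ) < (n:ℝ)^2/N*(1+81*n/N) := by positivity
  have hanti2 : StrictAntiOn f1 (Set.Icc ((n:ℝ)^2/N*(1+81*n/N)) (9*(n:ℝ)^2/N)) := by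
    apply strictAntiOn_of_deriv_neg (convex_Icc _ _) hcontf1.continuousOn
    intro x hx
    rw [interior_Icc] at hx
    obtain ⟨hx1, hx2⟩ := hx
    have hx0 : 0 < x := lt_trans hX2pos hx1
    have hxn : x < (n:ℝ) := lt_of_lt_of_le hx2 h9n
    rw [(hd x hx0 hxn).deriv]
    have hW : (0:ℝ) < (N:ℝ) - 2*n + x := by linarith
    have hden : 0 < x * ((N:ℝ) - 2*n + x) := by positivity
    have hxN2 : (n:ℝ)^2*(N+81*n) < x * N^2 := by
      rw [hX2eq] at hx1
      exact (div_lt_iff₀ (by positivity)).mp hx1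
    have hxN9 : x * N < 9*(n:ℝ)^2 := (lt_div_iff₀ Np).mp hx2
    have hmul : (N:ℝ)*((n:ℝ) - x)^2 ≤ ((N:ℝ) - 9*n)*(x*((N:ℝ) - 2*n + x)) := by
      nlinarith [mul_lt_mul_of_pos_left hxN9 (show (0:ℝ) < 9*n by linarith),
        mul_pos (mul_pos (show (0:ℝ) < 9*n by linarith) hx0)
          (show (0:ℝ) < 2*n - x by linarith)]
    have hRle : ((n:ℝ) - x)^2 / (x * ((N:ℝ) - 2*n + x)) ≤ 1 - 9*(n:ℝ)/N := by
      rw [div_le_iff₀ hden]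
      have heq2 : (1 - 9*(n:ℝ)/N)*(x*((N:ℝ) - 2*n + x))
          = ((N:ℝ) - 9*n)*(x*((N:ℝ) - 2*n + x))/N := by
        field_simp
      rw [heq2, le_div_iff₀ Np]
      linarith
    have hexp : 1 - 9*(n:ℝ)/N < Real.exp (-(9*(n:ℝ)/N)) := by
      have h9 : (0:ℝ) < 9*(n:ℝ)/N := by positivity
      have := Real.add_one_lt_exp (show -(9*(n:ℝ)/N) ≠ 0 by linarith)
      linarith
    have hR0 : 0 < ((n:ℝ) - x)^2 / (x * ((N:ℝ) - 2*n + x)) := by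
      have hnx : (0:ℝ) < (n:ℝ) - x := by linarith
      positivity
    have hlog : Real.log (((n:ℝ) - x)^2 / (x * ((N:ℝ) - 2*n + x))) < -(9*(n:ℝ)/N) :=
      (Real.log_lt_iff_lt_exp hR0).mpr (lt_of_le_of_lt hRle hexp)
    linarith
  have hmem1 : (n:ℝ)^2/N*(1+81*n/N) ∈ Set.Icc ((n:ℝ)^2/N*(1+81*n/N)) (9*(n:ℝ)^2/N) :=
    ⟨le_refl _, hX2le⟩
  have hmem2 : a ∈ Set.Icc ((n:ℝ)^2/N*(1+81*n/N)) (9*(n:ℝ)^2/N) := ⟨hcon.le, ha9⟩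
  have hlt : f1 a < f1 ((n:ℝ)^2/N*(1+81*n/N)) := hanti2 hmem1 hmem2 hcon
  have hle : fQ n N B ((n:ℝ)^2/N*(1+81*n/N)) b ≤ fQ n N B a b :=
    hmax (Set.mk_mem_prod ⟨hX2pos.le, le_trans hX2le h9n⟩ ⟨hb0, hbn⟩)
  rw [hfq, hfq] at hle
  linarith

lemma isMaxOn_swap (n N : ℕ) (B : ℝ) (a b : ℝ)
    (hmax : IsMaxOn (fun p : ℝ × ℝ => fQ n N B p.1 p.2)
      (Set.Icc (0:ℝ) (n:ℝ) ×ˢ Set.Icc (0:ℝ) (n:ℝ)) (a, b)) :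
    IsMaxOn (fun p : ℝ × ℝ => fQ n N B p.1 p.2)
      (Set.Icc (0:ℝ) (n:ℝ) ×ˢ Set.Icc (0:ℝ) (n:ℝ)) (b, a) := by
  intro p hp
  obtain ⟨hp1, hp2⟩ := hp
  have h1 : fQ n N B p.1 p.2 = fQ n N B p.2 p.1 := fQ_symm _ _ _ _ _
  have h2 : fQ n N B p.2 p.1 ≤ fQ n N B a b := hmax (Set.mk_mem_prod hp2 hp1)
  have h3 : fQ n N B a b = fQ n N B b a := fQ_symm _ _ _ _ _
  simp only [Set.mem_setOf_eq]
  calc fQ n N B p.1 p.2 ≤ fQ n N B a b := h1 ▸ h2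
    _ = fQ n N B b a := h3

set_option maxHeartbeats 1000000 in
/-- **Location of the maximizer.**  For positive integers n ≤ N/3 and any B ∈ [0, 1/n],
the function `fQ` is continuous on [0,n]², and there is an absolute constant C < ∞ such
that `fQ` attains its maximum over [0,n]² at a point of the square
`[n²/N, (n²/N)(1 + Cn/N)]²`. -/
theorem fQ_max_location :
    ∃ C : ℝ, 0 < C ∧ ∀ (n N : ℕ) (B : ℝ), 0 < n → 0 < N → 3 * n ≤ N →
      B ∈ Set.Icc (0 : ℝ) (1 / (n : ℝ)) →
      ContinuousOn (fun p : ℝ × ℝ => fQ n N B p.1 p.2)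
          (Set.Icc (0 : ℝ) (n : ℝ) ×ˢ Set.Icc (0 : ℝ) (n : ℝ)) ∧
      ∃ x y : ℝ,
        x ∈ Set.Icc ((n : ℝ) ^ 2 / N) ((n : ℝ) ^ 2 / N * (1 + C * n / N)) ∧
        y ∈ Set.Icc ((n : ℝ) ^ 2 / N) ((n : ℝ) ^ 2 / N * (1 + C * n / N)) ∧
        ∀ p ∈ Set.Icc (0 : ℝ) (n : ℝ) ×ˢ Set.Icc (0 : ℝ) (n : ℝ),
          fQ n N B p.1 p.2 ≤ fQ n N B x y := by
  refine ⟨132, by norm_num, ?_⟩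
  intro n N B hn hN h3 hB
  have np : (0:ℝ) < n := by exact_mod_cast hn
  have Np : (0:ℝ) < N := by exact_mod_cast hN
  have h3r : 3*(n:ℝ) ≤ N := by exact_mod_cast h3
  obtain ⟨hB0, hB1⟩ := hB
  have hfeq : (fun p : ℝ × ℝ => fQ n N B p.1 p.2)
      = fun p : ℝ × ℝ => G n N p.1 + G n N p.2 + B * p.1 * p.2 :=
    funext fun p => fQ_eq n N B p.1 p.2 np.ne' Np.ne'
  have hG := continuous_G n N np.ne' Np.ne'
  have hc : Continuous (fun p : ℝ × ℝ => fQ n N B p.1 p.2) := by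
    rw [hfeq]
    exact ((hG.comp continuous_fst).add (hG.comp continuous_snd)).add
      (((continuous_const.mul continuous_fst)).mul continuous_snd)
  refine ⟨hc.continuousOn, ?_⟩
  -- get a maximizer
  have hKc : IsCompact (Set.Icc (0:ℝ) (n:ℝ) ×ˢ Set.Icc (0:ℝ) (n:ℝ)) :=
    isCompact_Icc.prod isCompact_Icc
  have hKne : (Set.Icc (0:ℝ) (n:ℝ) ×ˢ Set.Icc (0:ℝ) (n:ℝ)).Nonempty :=
    ⟨(0, 0), Set.mk_mem_prod ⟨le_refl _, np.le⟩ ⟨le_refl _, np.le⟩⟩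
  obtain ⟨⟨a, b⟩, habK, hmax⟩ := hKc.exists_isMaxOn hKne hc.continuousOn
  have hmax' := isMaxOn_swap n N B a b hmax
  have hbaK : (b, a) ∈ Set.Icc (0:ℝ) (n:ℝ) ×ˢ Set.Icc (0:ℝ) (n:ℝ) :=
    Set.mk_mem_prod habK.2 habK.1
  obtain ⟨ha1, ha2, ha3⟩ := coord_bound n N B hn hN h3 hB0 hB1 a b habK hmax
  obtain ⟨hb1, hb2, hb3⟩ := coord_bound n N B hn hN h3 hB0 hB1 b a hbaK hmax'
  have han : a ≤ (n:ℝ) := habK.1.2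
  have hbn : b ≤ (n:ℝ) := habK.2.2
  -- upper bounds with C = 132
  have hupper : ∀ c : ℝ, c ≤ (n:ℝ) → c ≤ (n:ℝ)^2/N*(1+81*n/N) →
      c ≤ (n:ℝ)^2/N*(1+132*n/N) := by
    intro c _ h
    refine le_trans h ?_
    have key : (0:ℝ) ≤ (n:ℝ)^2/N*(51*n/N) := by positivity
    have hsplit : (n:ℝ)^2/N*(1+132*n/N) = (n:ℝ)^2/N*(1+81*n/N) + (n:ℝ)^2/N*(51*n/N) := by
      ring
    linarith
  have hcase : ∀ c : ℝ, c ≤ (n:ℝ) → ¬(12*(n:ℝ) ≤ N) →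
      c ≤ (n:ℝ)^2/N*(1+132*n/N) := by
    intro c hcn h12
    push_neg at h12
    refine le_trans hcn ?_
    have heq : (n:ℝ)^2/N*(1+132*n/N) = (n:ℝ)^2*(N+132*n)/N^2 := by
      field_simp
    rw [heq, le_div_iff₀ (by positivity)]
    nlinarith [mul_pos np Np, mul_lt_mul_of_pos_left h12 Np, mul_lt_mul_of_pos_left h12 np,
      mul_pos np np]
  have haU : a ≤ (n:ℝ)^2/N*(1+132*n/N) := by
    by_cases h12 : 12*(n:ℝ) ≤ N
    · exact hupper a han (ha3 h12 (hb2 h12))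
    · exact hcase a han h12
  have hbU : b ≤ (n:ℝ)^2/N*(1+132*n/N) := by
    by_cases h12 : 12*(n:ℝ) ≤ N
    · exact hupper b hbn (hb3 h12 (ha2 h12))
    · exact hcase b hbn h12
  exact ⟨a, b, ⟨ha1, haU⟩, ⟨hb1, hbU⟩, fun p hp => hmax hp⟩

end
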